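/- Let c ∈ ℝ³ and r > 0, and suppose (2 + α)|p|² = α⟨c, p⟩ for all p with |p - c₀| = r, where c₀ = c. Then either α = -2 and c = 0, or α = -4 and |c| = r. (This is the algebraic identity underlying the classification of stationary spheres.) -/

import Mathlib

open scoped RealInnerProductSpace

local notation "E" => EuclideanSpace ℝ (Fin 3)

/-- The algebraic identity underlying the classification of stationary spheres:
if (2 + α)|p|² = α⟪c, p⟫ for all points p of the sphere of center c and
radius r > 0, then either α = -2 and c = 0, or α = -4 and |c| = r. -/
theorem stationary_sphere_algebraic (α r : ℝ) (hr : 0 < r) (c : E)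
    (h : ∀ p : E, ‖p - c‖ = r → (2 + α) * ‖p‖ ^ 2 = α * ⟪c, p⟫) :
    (α = -2 ∧ c = 0) ∨ (α = -4 ∧ ‖c‖ = r) := by
  by_cases hc : c = 0
  · -- c = 0 : take p with ‖p‖ = r
    subst hc
    left
    refine ⟨?_, rfl⟩
    have hp := h (EuclideanSpace.single 0 r) (by
      simp [EuclideanSpace.norm_single, abs_of_pos hr])
    rw [inner_zero_left] at hp
    have hn : ‖(EuclideanSpace.single 0 r : E)‖ = r := by
      simp [EuclideanSpace.norm_single, abs_of_pos hr]
    rw [hn] at hp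
    have h0 : (2 + α) * r ^ 2 = 0 := by linarith
    have := (mul_eq_zero.mp h0).resolve_right (by positivity)
    linarith
  · right
    set t := ‖c‖ with ht
    have ht0 : 0 < t := norm_pos_iff.mpr hc
    set s : ℝ := r / t with hs
    have hs0 : 0 < s := div_pos hr ht0
    have hcc : ⟪c, c⟫ = t ^ 2 := by
      rw [real_inner_self_eq_norm_sq]
    -- two points on the sphere
    have key : ∀ a : ℝ, ‖(a • c : E) - c‖ = r →
        (2 + α) * (a ^ 2 * t ^ 2) = α * (a * t ^ 2) := by
      intro a ha
      calc (2 + α) * (a ^ 2 * t ^ 2) = (2 + α) * ‖a • c‖ ^ 2 := by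
            rw [norm_smul, Real.norm_eq_abs, mul_pow, sq_abs, ← ht]
        _ = α * ⟪c, a • c⟫ := h (a • c) ha
        _ = α * (a * t ^ 2) := by rw [real_inner_smul_right, hcc]
    have hnorm : ∀ a : ℝ, ‖((a : ℝ) • c : E) - c‖ = |a - 1| * t := by
      intro a
      have : (a • c : E) - c = (a - 1) • c := by
        rw [sub_smul, one_smul]
      rw [this, norm_smul, Real.norm_eq_abs, ← ht]
    have h1 : (2 + α) * ((1 + s) ^ 2 * t ^ 2) = α * ((1 + s) * t ^ 2) := by
      apply key
      rw [hnorm]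
      have : |1 + s - 1| = s := by rw [show (1 : ℝ) + s - 1 = s by ring, abs_of_pos hs0]
      rw [this, hs, div_mul_cancel₀ _ (ne_of_gt ht0)]
    have h2 : (2 + α) * ((1 - s) ^ 2 * t ^ 2) = α * ((1 - s) * t ^ 2) := by
      apply key
      rw [hnorm]
      have : |1 - s - 1| = s := by
        rw [show (1 : ℝ) - s - 1 = -s by ring, abs_neg, abs_of_pos hs0]
      rw [this, hs, div_mul_cancel₀ _ (ne_of_gt ht0)]
    have ht2 : t ^ 2 ≠ 0 := by positivity
    -- subtract to get α = -4
    have hα : α = -4 := by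
      have hd : (8 + 2 * α) * (s * t ^ 2) = 0 := by linear_combination h1 - h2
      have hst : s * t ^ 2 ≠ 0 := by positivity
      have := (mul_eq_zero.mp hd).resolve_right hst
      linarith
    refine ⟨hα, ?_⟩
    subst hα
    have hs1 : s = 1 := by
      have hd2 : (1 + s) * ((s - 1) * t ^ 2) = 0 := by linear_combination (-(1:ℝ)/2) * h1
      have h1s : (1 + s) ≠ 0 := by positivity
      have := ((mul_eq_zero.mp hd2).resolve_left h1s)
      have := (mul_eq_zero.mp this).resolve_right ht2
      linarith
    have : r = t := by
      field_simp [hs] at hs1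
      rw [hs, div_eq_one_iff_eq (ne_of_gt ht0)] at hs1
      linarith
    linarith
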